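/- In every player-specific congestion game on a circle with n ≥ 3 players in which every player is of type 3, and in every state which is not a Nash equilibrium, the number of players whose best response is to change from their 0-strategy to their 1-strategy equals the number of players whose best response is to change from their 1-strategy to their 0-strategy. -/

import Mathlib

open scoped ENNReal NNReal

/-- A player-specific singleton congestion game on a circle with `n` players:
the resources are `0, …, n-1`, and player `i` chooses between resource `i`
(its 0-strategy, with delay function `d0 i`) and resource `i+1 (mod n)`
(its 1-strategy, with delay function `d1 i`). The delay functions are strictly
increasing and ties are broken (for each player the delays of its two resources
at congestions `1 ≤ k ≤ n` are pairwise distinct). -/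
structure CircleGame (n : ℕ) where
  d0 : Fin n → ℕ → ℕ
  d1 : Fin n → ℕ → ℕ
  mono0 : ∀ i, StrictMono (d0 i)
  mono1 : ∀ i, StrictMono (d1 i)
  tie : ∀ i : Fin n, ∀ k, 1 ≤ k → k ≤ n → ∀ k', 1 ≤ k' → k' ≤ n → d0 i k ≠ d1 i k'

namespace CircleGame

variable {n : ℕ} [NeZero n]

/-- A state is a function `s : Fin n → Bool`: `s i = false` iff player `i` plays its
0-strategy (resource `i`), and `s i = true` iff it plays its 1-strategy (resource `i+1`).
`cong s r` is the congestion of resource `r`: resource `r` is allocated by player `r`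
(if it plays its 0-strategy) and by player `r-1` (if it plays its 1-strategy). -/
def cong (s : Fin n → Bool) (r : Fin n) : ℕ :=
  (if s r = false then 1 else 0) + (if s (r - 1) = true then 1 else 0)

/-- The current resource of player `i` is a best response to state `s`. -/
def CurrentBR (G : CircleGame n) (s : Fin n → Bool) (i : Fin n) : Prop :=
  if s i = false then G.d0 i (cong s i) ≤ G.d1 i (cong s (i + 1) + 1)
  else G.d1 i (cong s (i + 1)) ≤ G.d0 i (cong s i + 1)

/-- One best-response step: a player whose current resource is not a best response
switches to its (unique) other resource, which is then its best response. -/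
def Step (G : CircleGame n) (s s' : Fin n → Bool) : Prop :=
  ∃ i, ¬ G.CurrentBR s i ∧ s' = Function.update s i (!(s i))

/-- Nash equilibrium: every player's current resource is a best response. -/
def IsNash (G : CircleGame n) (s : Fin n → Bool) : Prop := ∀ i, G.CurrentBR s i

/-- type 1 : `d_{r_i}(1) < d_{r_i}(2) < d_{r_{i+1}}(1) < d_{r_{i+1}}(2)`. -/
def IsType1 (G : CircleGame n) (i : Fin n) : Prop :=
  G.d0 i 1 < G.d0 i 2 ∧ G.d0 i 2 < G.d1 i 1 ∧ G.d1 i 1 < G.d1 i 2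

/-- type 1' : roles of the two resources exchanged. -/
def IsType1' (G : CircleGame n) (i : Fin n) : Prop :=
  G.d1 i 1 < G.d1 i 2 ∧ G.d1 i 2 < G.d0 i 1 ∧ G.d0 i 1 < G.d0 i 2

/-- type 2 : `d_{r_i}(1) < d_{r_{i+1}}(1) < d_{r_i}(2) < d_{r_{i+1}}(2)`. -/
def IsType2 (G : CircleGame n) (i : Fin n) : Prop :=
  G.d0 i 1 < G.d1 i 1 ∧ G.d1 i 1 < G.d0 i 2 ∧ G.d0 i 2 < G.d1 i 2

/-- type 2' : roles of the two resources exchanged. -/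
def IsType2' (G : CircleGame n) (i : Fin n) : Prop :=
  G.d1 i 1 < G.d0 i 1 ∧ G.d0 i 1 < G.d1 i 2 ∧ G.d1 i 2 < G.d0 i 2

/-- type 3 : `d_{r_i}(1) < d_{r_{i+1}}(1) < d_{r_{i+1}}(2) < d_{r_i}(2)`. -/
def IsType3 (G : CircleGame n) (i : Fin n) : Prop :=
  G.d0 i 1 < G.d1 i 1 ∧ G.d1 i 1 < G.d1 i 2 ∧ G.d1 i 2 < G.d0 i 2

/-- type 3' : roles of the two resources exchanged. -/
def IsType3' (G : CircleGame n) (i : Fin n) : Prop :=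
  G.d1 i 1 < G.d0 i 1 ∧ G.d0 i 1 < G.d0 i 2 ∧ G.d0 i 2 < G.d1 i 2

/-- Resource `r_i` is a termination point for overload tokens: the pair of types of
players `i-1` and `i` is one of `(2',2), (3,3'), (3,2), (2',3')`. -/
def OverloadTP (G : CircleGame n) (i : Fin n) : Prop :=
  (G.IsType2' (i - 1) ∧ G.IsType2 i) ∨ (G.IsType3 (i - 1) ∧ G.IsType3' i) ∨
  (G.IsType3 (i - 1) ∧ G.IsType2 i) ∨ (G.IsType2' (i - 1) ∧ G.IsType3' i)

/-- Resource `r_i` is a termination point for underload tokens: the pair of types of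
players `i-1` and `i` is one of `(2,2'), (3,3'), (2,3'), (3,2')`. -/
def UnderloadTP (G : CircleGame n) (i : Fin n) : Prop :=
  (G.IsType2 (i - 1) ∧ G.IsType2' i) ∨ (G.IsType3 (i - 1) ∧ G.IsType3' i) ∨
  (G.IsType2 (i - 1) ∧ G.IsType3' i) ∨ (G.IsType3 (i - 1) ∧ G.IsType2' i)

open scoped Classical in
/-- The set of players whose current resource is not a best response. -/
noncomputable def unsat (G : CircleGame n) (s : Fin n → Bool) : Finset (Fin n) :=
  Finset.univ.filter fun i => ¬ G.CurrentBR s i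

/-- One step of the random best response dynamics: in a state that is not a Nash
equilibrium, a player whose current resource is not a best response is selected
uniformly at random and switches to its best response; Nash equilibria are absorbing. -/
noncomputable def stepPMF (G : CircleGame n) (s : Fin n → Bool) : PMF (Fin n → Bool) :=
  if h : (G.unsat s).Nonempty then
    (PMF.uniformOfFinset (G.unsat s) h).bind fun i => PMF.pure (Function.update s i (!(s i)))
  else PMF.pure s

/-- The distribution of the random best response dynamics after `t` steps, started in `s`. -/
noncomputable def walk (G : CircleGame n) (s : Fin n → Bool) : ℕ → PMF (Fin n → Bool)
  | 0 => PMF.pure s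
  | t + 1 => (walk G s t).bind G.stepPMF

open scoped Classical in
/-- The expected number of steps until the random best response dynamics started in `s`
reaches a Nash equilibrium: since Nash equilibria are absorbing, this is
`∑_{t ≥ 0} Pr[X_t is not a Nash equilibrium]`. -/
noncomputable def expTime (G : CircleGame n) (s : Fin n → Bool) : ℝ≥0∞ :=
  ∑' t : ℕ, ∑ s' ∈ Finset.univ.filter (fun s' => ¬ G.IsNash s'), G.walk s t s'

end CircleGame


open CircleGame in
lemma circle_unsat_false_iff {n : ℕ} [NeZero n] (G : CircleGame n)
    (h3 : ∀ i, G.IsType3 i) (s : Fin n → Bool) (i : Fin n) (h : s i = false) :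
    ¬ G.CurrentBR s i ↔ s (i-1) = true := by
  obtain ⟨h1, h2, h4⟩ := h3 i
  have e : i + 1 - 1 = i := by simp
  unfold CircleGame.CurrentBR CircleGame.cong
  rw [e]
  rcases Bool.eq_false_or_eq_true (s (i-1)) with hb | hb <;>
  rcases Bool.eq_false_or_eq_true (s (i+1)) with hc | hc <;>
  simp only [h, hb, hc, if_true, if_false, reduceIte, Bool.false_eq_true,
    Bool.true_eq_false] <;> norm_num <;> omega

open CircleGame in
lemma circle_unsat_true_iff {n : ℕ} [NeZero n] (G : CircleGame n)
    (h3 : ∀ i, G.IsType3 i) (s : Fin n → Bool) (i : Fin n) (h : s i = true) :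
    ¬ G.CurrentBR s i ↔ s (i-1) = false := by
  obtain ⟨h1, h2, h4⟩ := h3 i
  have e : i + 1 - 1 = i := by simp
  unfold CircleGame.CurrentBR CircleGame.cong
  rw [e]
  rcases Bool.eq_false_or_eq_true (s (i-1)) with hb | hb <;>
  rcases Bool.eq_false_or_eq_true (s (i+1)) with hc | hc <;>
  simp only [h, hb, hc, if_true, if_false, reduceIte, Bool.false_eq_true,
    Bool.true_eq_false] <;> norm_num <;> omega

open Classical in
lemma circle_count_eq {n : ℕ} [NeZero n] (s : Fin n → Bool) :
    (Finset.univ.filter fun i : Fin n => s i = false ∧ s (i-1) = true).card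
      = (Finset.univ.filter fun i : Fin n => s i = true ∧ s (i-1) = false).card := by
  classical
  have h1 : ∀ i : Fin n, (if s i = true ∧ s (i-1) = false then (1:ℤ) else 0)
      - (if s i = false ∧ s (i-1) = true then 1 else 0)
      = (if s i = true then 1 else 0) - (if s (i-1) = true then 1 else 0) := by
    intro i
    rcases Bool.eq_false_or_eq_true (s i) with h | h <;>
    rcases Bool.eq_false_or_eq_true (s (i-1)) with h' | h' <;> simp [h, h']
  have h2 : ∑ i : Fin n, (if s (i-1) = true then (1:ℤ) else 0)
      = ∑ i : Fin n, (if s i = true then (1:ℤ) else 0) := by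
    apply Fintype.sum_equiv (Equiv.subRight (1:Fin n))
    intro i; rfl
  have h3 : ((Finset.univ.filter fun i : Fin n => s i = true ∧ s (i-1) = false).card : ℤ)
      - ((Finset.univ.filter fun i : Fin n => s i = false ∧ s (i-1) = true).card : ℤ) = 0 := by
    rw [← Finset.sum_boole, ← Finset.sum_boole, ← Finset.sum_sub_distrib,
      Finset.sum_congr rfl (fun i _ => h1 i), Finset.sum_sub_distrib, h2]
    ring
  omega

/-- In every circle game with `n ≥ 3` players, all of type 3, and every
state that is not a Nash equilibrium, the number of players whose best response is to
change from their 0- to their 1-strategy equals the number of players whose best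
response is to change from their 1- to their 0-strategy. -/
theorem circle_type3_balanced_unsatisfied
    (n : ℕ) [NeZero n] (hn : 3 ≤ n) (G : CircleGame n)
    (h3 : ∀ i, G.IsType3 i) (s : Fin n → Bool) (hs : ¬ G.IsNash s) :
    {i : Fin n | ¬ G.CurrentBR s i ∧ s i = false}.ncard =
      {i : Fin n | ¬ G.CurrentBR s i ∧ s i = true}.ncard := by
  classical
  have hA : {i : Fin n | ¬ G.CurrentBR s i ∧ s i = false}
      = ↑(Finset.univ.filter fun i : Fin n => s i = false ∧ s (i-1) = true) := by
    ext i
    simp only [Set.mem_setOf_eq, Finset.coe_filter, Finset.mem_univ, true_and]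
    constructor
    · rintro ⟨hbr, hf⟩
      exact ⟨hf, (circle_unsat_false_iff G h3 s i hf).mp hbr⟩
    · rintro ⟨hf, ht⟩
      exact ⟨(circle_unsat_false_iff G h3 s i hf).mpr ht, hf⟩
  have hB : {i : Fin n | ¬ G.CurrentBR s i ∧ s i = true}
      = ↑(Finset.univ.filter fun i : Fin n => s i = true ∧ s (i-1) = false) := by
    ext i
    simp only [Set.mem_setOf_eq, Finset.coe_filter, Finset.mem_univ, true_and]
    constructor
    · rintro ⟨hbr, hf⟩
      exact ⟨hf, (circle_unsat_true_iff G h3 s i hf).mp hbr⟩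
    · rintro ⟨hf, ht⟩
      exact ⟨(circle_unsat_true_iff G h3 s i hf).mpr ht, hf⟩
  rw [hA, hB, Set.ncard_coe_finset, Set.ncard_coe_finset]
  exact circle_count_eq s
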